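/- Let f ∈ 𝓕_n and O := O_f. The following are equivalent: (i) f is a monotone subtype; (ii) both f and f* are monotone; (iii) the support supp(f) := {s ∈ {0,1}^n : f(s) = 1} is an upset with respect to ≤_O and supp(f) ∩ {s : s ≤_O θ} = {θ}. -/

import Mathlib

open Classical

namespace HOT

/-- Binary strings of length `n`, identified with `{0,1}^n`. -/
abbrev Str (n : ℕ) := Fin n → Bool

/-- The all-zeros string `θ`. -/
def theta (n : ℕ) : Str n := fun _ => false

/-- `𝓕_n`: boolean functions on `{0,1}^n` with `f(θ) = 1`. -/
def Fcal (n : ℕ) : Set (Str n → Bool) := {f | f (theta n) = true}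

/-- The complement `f* = 1 - f + p_n`. -/
noncomputable def star {n : ℕ} (f : Str n → Bool) : Str n → Bool :=
  fun s => if s = theta n then true else !(f s)

/-- First block `s¹` of a string `s ∈ {0,1}^{m+n}`. -/
def fstStr {m n : ℕ} (s : Str (m + n)) : Str m := fun i => s (Fin.castAdd n i)

/-- Second block `s²` of a string `s ∈ {0,1}^{m+n}`. -/
def sndStr {m n : ℕ} (s : Str (m + n)) : Str n := fun j => s (Fin.natAdd m j)

/-- Tensor product `(f ⊗ g)(s) = f(s¹) · g(s²)`. -/
noncomputable def tensor {m n : ℕ} (f : Str m → Bool) (g : Str n → Bool) :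
    Str (m + n) → Bool :=
  fun s => f (fstStr s) && g (sndStr s)

/-- `f ⅋ g := (f* ⊗ g*)*`. -/
noncomputable def parr {m n : ℕ} (f : Str m → Bool) (g : Str n → Bool) :
    Str (m + n) → Bool :=
  star (tensor (star f) (star g))

/-- The causal product `f ◁ g` (`f` on the first `m` bits, `g` on the last `n` bits):
`(f ◁ g)(s) = f(s¹)` if `s¹ ≠ θ_m`, else `g(s²)`. -/
noncomputable def causalL {m n : ℕ} (f : Str m → Bool) (g : Str n → Bool) :
    Str (m + n) → Bool :=
  fun s => if fstStr s = theta m then g (sndStr s) else f (fstStr s)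

/-- The causal product `g ◁ f` (`f` on the first `m` bits, `g` on the last `n` bits):
`(g ◁ f)(s) = g(s²)` if `s² ≠ θ_n`, else `f(s¹)`. -/
noncomputable def causalR {m n : ℕ} (f : Str m → Bool) (g : Str n → Bool) :
    Str (m + n) → Bool :=
  fun s => if sndStr s = theta n then f (fstStr s) else g (sndStr s)

/-- `p_T(s) = 1` iff `s_i = 0` for all `i ∈ T`. -/
noncomputable def pSet {n : ℕ} (T : Set (Fin n)) : Str n → Bool :=
  fun s => decide (∀ i ∈ T, s i = false)

/-- The string `e^i` with `1` exactly in position `i`. -/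
def eStr {n : ℕ} (i : Fin n) : Str n := fun j => decide (j = i)

/-- The string `e^{i,j}` with `1` exactly in positions `i` and `j`. -/
def e2Str {n : ℕ} (i j : Fin n) : Str n := fun l => decide (l = i ∨ l = j)

/-- Input indices `I_f = {i : f(e^i) = 0}`. -/
def Iset {n : ℕ} (f : Str n → Bool) : Set (Fin n) := {i | f (eStr i) = false}

/-- Output indices `O_f = {j : f(e^j) = 1}`. -/
def Oset {n : ℕ} (f : Str n → Bool) : Set (Fin n) := {j | f (eStr j) = true}

/-- `f` is a subtype if `p_{I_f} ≤ f ≤ (p_{O_f})*` pointwise. -/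
def IsSubtype {n : ℕ} (f : Str n → Bool) : Prop :=
  pSet (Iset f) ≤ f ∧ f ≤ star (pSet (Oset f))

/-- The partial order `≤_O`: `s ≤_O t` iff `s_i ≤ t_i` for `i ∈ O` and `s_i ≥ t_i` for
`i ∉ O`. -/
def leO {n : ℕ} (O : Set (Fin n)) (s t : Str n) : Prop :=
  ∀ i, (i ∈ O → s i ≤ t i) ∧ (i ∉ O → t i ≤ s i)

/-- `f` is monotone (with respect to `≤_{O_f}`). -/
def MonotoneF {n : ℕ} (f : Str n → Bool) : Prop :=
  ∀ s t, leO (Oset f) s t → f s ≤ f t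

/-- The action of a permutation on strings: `σ(s)_i = s_{σ⁻¹(i)}`. -/
def permAct {n : ℕ} (σ : Equiv.Perm (Fin n)) (s : Str n) : Str n := fun i => s (σ⁻¹ i)

/-- `(f ∘ σ)(s) = f(σ(s))`. -/
def permComp {n : ℕ} (f : Str n → Bool) (σ : Equiv.Perm (Fin n)) : Str n → Bool :=
  fun s => f (permAct σ s)

/-- The inductively defined family `𝓣_n` of type functions. -/
inductive IsType : (n : ℕ) → (Str n → Bool) → Prop
  | one : IsType 1 (fun _ => true)
  | dual {n : ℕ} {f : Str n → Bool} : IsType n f → IsType n (star f)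
  | perm {n : ℕ} {f : Str n → Bool} (σ : Equiv.Perm (Fin n)) :
      IsType n f → IsType n (permComp f σ)
  | tens {m n : ℕ} {f : Str m → Bool} {g : Str n → Bool} :
      IsType m f → IsType n g → IsType (m + n) (tensor f g)

/-- Interpretation of a bit as an integer. -/
def toZ (b : Bool) : ℤ := (b.toNat : ℤ)

/-- `f` is a chain type: `f = Σ_{i=0}^N (-1)^i p_{S_i}` for a strictly increasing chain
`S_0 ⊊ ⋯ ⊊ S_N ⊆ [n]` with `N` even. -/
def IsChainType {n : ℕ} (f : Str n → Bool) : Prop :=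
  ∃ N : ℕ, Even N ∧ ∃ S : Fin (N + 1) → Set (Fin n), StrictMono S ∧
    ∀ s : Str n, toZ (f s) = ∑ i : Fin (N + 1), (-1 : ℤ) ^ (i : ℕ) * toZ (pSet (S i) s)

/-- The Möbius transform `f̂_T`. -/
noncomputable def mobius {n : ℕ} (f : Str n → Bool) (T : Set (Fin n)) : ℤ :=
  ∑ s : Str n, if ∀ j, j ∉ T → s j = true then
    (-1 : ℤ) ^ (∑ j : Fin n, if j ∈ T then (s j).toNat else 0) * toZ (f s)
  else 0

/-- The structure poset `𝓟_f = {T ⊆ [n] : f̂_T ≠ 0}`, ordered by inclusion. -/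
noncomputable def structPoset {n : ℕ} (f : Str n → Bool) : Set (Set (Fin n)) :=
  {T | mobius f T ≠ 0}

/-- The label set `L_T = T ∖ ⋃ {S ∈ 𝓟_f : S ⊊ T}`. -/
noncomputable def labels {n : ℕ} (f : Str n → Bool) (T : Set (Fin n)) : Set (Fin n) :=
  T \ ⋃₀ {S | S ∈ structPoset f ∧ S ⊂ T}

/-- The reduced structure poset `𝓟_f^0`: `∅` (if `∅ ∈ 𝓟_f`) together with all
`T ∈ 𝓟_f` with `L_T ≠ ∅`. -/
noncomputable def reducedPoset {n : ℕ} (f : Str n → Bool) : Set (Set (Fin n)) :=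
  {T | T ∈ structPoset f ∧ (T = ∅ ∨ labels f T ≠ ∅)}

/-- The rank `ρ_f(T)`: the length of a longest chain in `𝓟_f` with top element `T`
(this is the length of any maximal such chain in the graded poset `𝓟_f`). -/
noncomputable def rank {n : ℕ} (f : Str n → Bool) (T : Set (Fin n)) : ℕ :=
  sSup {k | ∃ c : Fin (k + 1) → Set (Fin n), StrictMono c ∧
    (∀ i, c i ∈ structPoset f) ∧ c (Fin.last k) = T}

/-- The rank `r(f)` of the whole poset `𝓟_f`: the common length of its maximal chains. -/
noncomputable def rk {n : ℕ} (f : Str n → Bool) : ℕ :=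
  sSup {k | ∃ c : Fin (k + 1) → Set (Fin n), StrictMono c ∧ ∀ i, c i ∈ structPoset f}

/-- `𝕋_i^f = {T ∈ 𝓟_f : i ∈ L_T}`. -/
noncomputable def Tset {n : ℕ} (f : Str n → Bool) (i : Fin n) : Set (Set (Fin n)) :=
  {T | T ∈ structPoset f ∧ i ∈ labels f T}

/-- The rank `r_f(i)` of an index: the common rank of elements of `𝕋_i^f`, or `r(f)+1`
if `𝕋_i^f = ∅` (a free output). -/
noncomputable def idxRank {n : ℕ} (f : Str n → Bool) (i : Fin n) : ℕ :=
  if (Tset f i).Nonempty then sSup (rank f '' Tset f i) else rk f + 1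

/-- `X` is the greatest lower bound of `S` and `T` in the poset `(P, ⊆)`. -/
def IsGLBIn {n : ℕ} (P : Set (Set (Fin n))) (S T X : Set (Fin n)) : Prop :=
  X ∈ P ∧ X ⊆ S ∧ X ⊆ T ∧ ∀ Y ∈ P, Y ⊆ S → Y ⊆ T → Y ⊆ X

/-- `X` is the least upper bound of `S` and `T` in the poset `(P, ⊆)`. -/
def IsLUBIn {n : ℕ} (P : Set (Set (Fin n))) (S T X : Set (Fin n)) : Prop :=
  X ∈ P ∧ S ⊆ X ∧ T ⊆ X ∧ ∀ Y ∈ P, S ⊆ Y → T ⊆ Y → X ⊆ Y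

/-- `S^↓`: the downset generated by `S` in `𝓟_f^0`. -/
noncomputable def downSet {n : ℕ} (f : Str n → Bool) (S : Set (Fin n)) :
    Set (Set (Fin n)) :=
  {X | X ∈ reducedPoset f ∧ X ⊆ S}

/-- `S^↑`: the upset generated by `S` in `𝓟_f^0`. -/
noncomputable def upSet {n : ℕ} (f : Str n → Bool) (S : Set (Fin n)) :
    Set (Set (Fin n)) :=
  {X | X ∈ reducedPoset f ∧ S ⊆ X}

/-- The pair rank `r_f(i,j)`: `max{ρ_f(S ∧ T) : S ∈ 𝕋_i^f, T ∈ 𝕋_j^f, S ∧ T exists in 𝓟_f}`;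
`-1` if this set is empty, unless `i` or `j` is a free output, in which case it is
`min{r_f(i), r_f(j)}`. -/
noncomputable def pairRank {n : ℕ} (f : Str n → Bool) (i j : Fin n) : ℤ :=
  if _h : ∃ r : ℤ, ∃ S ∈ Tset f i, ∃ T ∈ Tset f j, ∃ X, IsGLBIn (structPoset f) S T X ∧
      r = (rank f X : ℤ) then
    sSup {r : ℤ | ∃ S ∈ Tset f i, ∃ T ∈ Tset f j, ∃ X, IsGLBIn (structPoset f) S T X ∧
      r = (rank f X : ℤ)}
  else if Tset f i = ∅ ∨ Tset f j = ∅ then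
    min (idxRank f i : ℤ) (idxRank f j : ℤ)
  else -1

/-- Membership in the sublattice generated by a set `S`. -/
inductive InLatGen {α : Type*} [Lattice α] (S : Set α) : α → Prop
  | base {a : α} : a ∈ S → InLatGen S a
  | sup {a b : α} : InLatGen S a → InLatGen S b → InLatGen S (a ⊔ b)
  | inf {a b : α} : InLatGen S a → InLatGen S b → InLatGen S (a ⊓ b)

/-- For `s ≰_O θ`, `f_s` is the function with support `U_s ∪ U_θ` (w.r.t. `≤_O`). -/
noncomputable def fStr {n : ℕ} (O : Set (Fin n)) (s : Str n) : Str n → Bool :=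
  fun t => decide (leO O s t ∨ leO O (theta n) t)

/-- A string `s ∉ D_θ ∪ U_θ` is basic (for `≤_O`) if `s_j = 1` for exactly one `j ∈ O`
and `s_i = 0` for at most one `i ∈ I = Oᶜ`. -/
def IsBasic {n : ℕ} (O : Set (Fin n)) (s : Str n) : Prop :=
  ¬ leO O s (theta n) ∧ ¬ leO O (theta n) s ∧
  (∃! j, j ∈ O ∧ s j = true) ∧
  (∀ i i', i ∈ Oᶜ → i' ∈ Oᶜ → s i = false → s i' = false → i = i')

lemma bool_le_iff {a b : Bool} : a ≤ b ↔ (a = true → b = true) := by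
  cases a <;> cases b <;> simp

lemma bool_le_false_iff {a : Bool} : a ≤ false ↔ a = false := by
  cases a <;> simp

lemma eStr_ne_theta {n : ℕ} (j : Fin n) : eStr j ≠ theta n := by
  intro h
  have := congrFun h j
  simp [eStr, theta] at this

lemma mem_Oset_star {n : ℕ} (f : Str n → Bool) (j : Fin n) :
    j ∈ Oset (star f) ↔ j ∉ Oset f := by
  simp [Oset, star, eStr_ne_theta, Set.mem_setOf_eq]

lemma leO_star {n : ℕ} (f : Str n → Bool) (s t : Str n) :
    leO (Oset (star f)) s t ↔ leO (Oset f) t s := by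
  constructor <;> intro h i <;> obtain ⟨h1, h2⟩ := h i <;> constructor <;> intro hm
  · exact h2 (fun hc => ((mem_Oset_star f i).mp hc) hm)
  · exact h1 ((mem_Oset_star f i).mpr hm)
  · exact h2 ((mem_Oset_star f i).mp hm)
  · exact h1 (not_not.mp fun hc => hm ((mem_Oset_star f i).mpr hc))

/-- for `f ∈ 𝓕_n` with `O = O_f`, the following are equivalent:
(i) `f` is a monotone subtype; (ii) `f` and `f*` are both monotone;
(iii) `supp(f)` is an upset w.r.t. `≤_O` and `supp(f) ∩ {s : s ≤_O θ} = {θ}`. -/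
theorem stmt8 {n : ℕ} (f : Str n → Bool) (hf : f ∈ Fcal n) :
    ((IsSubtype f ∧ MonotoneF f) ↔ (MonotoneF f ∧ MonotoneF (star f))) ∧
    ((IsSubtype f ∧ MonotoneF f) ↔
      ((∀ s t, f s = true → leO (Oset f) s t → f t = true) ∧
        {s | f s = true} ∩ {s | leO (Oset f) s (theta n)} = {theta n})) := by
  have hfθ : f (theta n) = true := hf
  set O := Oset f with hO
  have lerefl : ∀ s : Str n, leO O s s := fun s i => ⟨fun _ => le_refl _, fun _ => le_refl _⟩
  have hmono_iff : MonotoneF f ↔ ∀ s t, f s = true → leO O s t → f t = true := by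
    constructor
    · intro h s t hs hst; exact bool_le_iff.mp (h s t hst) hs
    · intro h s t hst; exact bool_le_iff.mpr (fun hs => h s t hs hst)
  have hsub_iff : IsSubtype f ↔
      ((∀ s, leO O (theta n) s → f s = true) ∧
       (∀ s, f s = true → leO O s (theta n) → s = theta n)) := by
    unfold IsSubtype
    constructor
    · rintro ⟨h1, h2⟩
      constructor
      · intro s hs
        have hp : pSet (Iset f) s = true := by
          simp only [pSet, decide_eq_true_eq]
          intro i hi
          have hiO : i ∉ O := by
            intro hiO
            have : f (eStr i) = false := hi
            rw [hiO] at this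
            simp at this
          have := (hs i).2 hiO
          exact bool_le_false_iff.mp this
        exact bool_le_iff.mp (h1 s) hp
      · intro s hfs hsθ
        by_contra hne
        have h2s := bool_le_iff.mp (h2 s) hfs
        simp only [star, if_neg hne] at h2s
        have hps : pSet O s = true := by
          simp only [pSet, decide_eq_true_eq]
          intro j hj
          exact bool_le_false_iff.mp ((hsθ j).1 hj)
        simp [← hO, hps] at h2s
    · rintro ⟨h1, h2⟩
      constructor
      · intro s
        refine bool_le_iff.mpr fun hp => ?_
        apply h1
        simp only [pSet, decide_eq_true_eq] at hp
        intro i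
        refine ⟨fun _ => Bool.false_le _, fun hi => ?_⟩
        have hfe : f (eStr i) = false := by
          cases hfe : f (eStr i) with
          | false => rfl
          | true => exact absurd hfe hi
        have := hp i hfe
        exact bool_le_false_iff.mpr this
      · intro s
        refine bool_le_iff.mpr fun hfs => ?_
        by_cases hsθ : s = theta n
        · simp [star, hsθ]
        · simp only [star, if_neg hsθ, Bool.not_eq_true']
          cases hps : pSet O s with
          | false => rfl
          | true =>
            exfalso
            apply hsθ
            apply h2 s hfs
            simp only [pSet, decide_eq_true_eq] at hps
            intro i
            refine ⟨fun hi => bool_le_false_iff.mpr (hps i hi), fun _ => Bool.false_le _⟩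
  have hC2 : (∀ s, f s = true → leO O s (theta n) → s = theta n) ↔
      {s | f s = true} ∩ {s | leO O s (theta n)} = {theta n} := by
    constructor
    · intro h
      apply Set.eq_singleton_iff_unique_mem.mpr
      refine ⟨⟨hfθ, lerefl _⟩, ?_⟩
      rintro s ⟨hs1, hs2⟩
      exact h s hs1 hs2
    · intro h s hs1 hs2
      have : s ∈ ({theta n} : Set (Str n)) := h ▸ ⟨hs1, hs2⟩
      exact this
  have hstar_iff : MonotoneF (star f) ↔ ∀ s t, leO O t s → star f s ≤ star f t := by
    unfold MonotoneF
    constructor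
    · intro h s t hts; exact h s t ((leO_star f s t).mpr hts)
    · intro h s t hst; exact h s t ((leO_star f s t).mp hst)
  have hC_to_star : (∀ s t, f s = true → leO O s t → f t = true) →
      (∀ s, f s = true → leO O s (theta n) → s = theta n) →
      MonotoneF (star f) := by
    intro hup hint
    rw [hstar_iff]
    intro s t hts
    refine bool_le_iff.mpr fun hs => ?_
    by_cases htθ : t = theta n
    · simp [star, htθ]
    · simp only [star, if_neg htθ, Bool.not_eq_true']
      cases hft : f t with
      | false => rfl
      | true =>
        exfalso
        by_cases hsθ : s = theta n
        · rw [hsθ] at hts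
          exact htθ (hint t hft hts)
        · rw [star, if_neg hsθ] at hs
          have hfs : f s = false := by simpa using hs
          have := hup t s hft hts
          rw [this] at hfs
          simp at hfs
  have hstar_to_int : MonotoneF (star f) →
      ∀ s, f s = true → leO O s (theta n) → s = theta n := by
    intro hm s hfs hsθ
    by_contra hne
    have hle := hstar_iff.mp hm (theta n) s hsθ
    have hθ : star f (theta n) = true := by simp [star]
    have hss : star f s = true := bool_le_iff.mp hle hθ
    rw [star, if_neg hne] at hss
    simp [hfs] at hss
  constructor
  · constructor
    · rintro ⟨hsub, hmono⟩
      obtain ⟨h1, h2⟩ := hsub_iff.mp hsub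
      exact ⟨hmono, hC_to_star (hmono_iff.mp hmono) h2⟩
    · rintro ⟨hmono, hstar⟩
      refine ⟨hsub_iff.mpr ⟨?_, hstar_to_int hstar⟩, hmono⟩
      intro s hs
      exact hmono_iff.mp hmono (theta n) s hfθ hs
  · constructor
    · rintro ⟨hsub, hmono⟩
      obtain ⟨h1, h2⟩ := hsub_iff.mp hsub
      exact ⟨hmono_iff.mp hmono, hC2.mp h2⟩
    · rintro ⟨hup, hint⟩
      exact ⟨hsub_iff.mpr ⟨fun s hs => hup (theta n) s hfθ hs, hC2.mpr hint⟩,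
        hmono_iff.mpr hup⟩

end HOT
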